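/- For d ≥ 2 and n ≥ 1, the two recursions agree: Σ_{k=0}^{n} C(n,k)^2 · f_{d-1}(k) = d · Σ_{k=0}^{n-1} C(n,k) · C(n-1,k) · f_{d-1}(k), where f is defined by f_d(n) = Σ_{m_1+⋯+m_d=n} (n!/(m_1!⋯m_d!))^2. -/

import Mathlib

/-- `f d n = Σ_{m₁+⋯+m_d = n} (n! / (m₁! ⋯ m_d!))²`, the number of abelian squares of
length `n + n` over a `d`-letter alphabet. -/
def f (d n : ℕ) : ℕ :=
  ∑ m ∈ Finset.Nat.antidiagonalTuple d n, (Nat.multinomial Finset.univ m) ^ 2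

open Finset in
lemma sum_antidiagonalTuple_succ {M : Type*} [AddCommMonoid M] (k n : ℕ)
    (g : (Fin (k + 1) → ℕ) → M) :
    ∑ m ∈ Finset.Nat.antidiagonalTuple (k + 1) n, g m
      = ∑ p ∈ Finset.HasAntidiagonal.antidiagonal n,
          ∑ x ∈ Finset.Nat.antidiagonalTuple k p.2, g (Fin.cons p.1 x) := by
  rw [Finset.sum_sigma']
  refine Finset.sum_nbij'
    (i := fun m => (⟨(m 0, ∑ i : Fin k, m i.succ), Fin.tail m⟩ :
      (_ : ℕ × ℕ) × (Fin k → ℕ)))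
    (j := fun q => Fin.cons q.1.1 q.2) ?_ ?_ ?_ ?_ ?_
  · intro m hm
    rw [Finset.Nat.mem_antidiagonalTuple] at hm
    simp only [Finset.mem_sigma, Finset.HasAntidiagonal.mem_antidiagonal,
      Finset.Nat.mem_antidiagonalTuple]
    constructor
    · rw [← hm, Fin.sum_univ_succ]
    · rfl
  · intro q hq
    simp only [Finset.mem_sigma, Finset.HasAntidiagonal.mem_antidiagonal,
      Finset.Nat.mem_antidiagonalTuple] at hq
    rw [Finset.Nat.mem_antidiagonalTuple, Fin.sum_univ_succ]
    simp [Fin.cons_succ, hq.2, hq.1]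
  · intro m hm
    simp [Fin.cons_self_tail]
  · intro q hq
    simp only [Finset.mem_sigma, Finset.HasAntidiagonal.mem_antidiagonal,
      Finset.Nat.mem_antidiagonalTuple] at hq
    ext1
    · simp only [Fin.cons_zero]
      ext1
      · rfl
      · simp [Fin.cons_succ, hq.2]
    · simp [Fin.tail, Fin.cons_succ]
  · intro m hm
    simp [Fin.cons_self_tail]

open Finset in
lemma multinomial_cons_univ (k a : ℕ) (x : Fin k → ℕ) :
    Nat.multinomial Finset.univ (Fin.cons a x)
      = (a + ∑ i, x i).choose a * Nat.multinomial Finset.univ x := by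
  rw [Fin.univ_succ, Nat.multinomial_cons]
  congr 1
  · simp [Fin.cons_succ]
  · unfold Nat.multinomial
    simp [Finset.sum_map, Finset.prod_map, Fin.cons_succ]

lemma multinomial_comp_equiv {k : ℕ} (σ : Equiv.Perm (Fin k)) (m : Fin k → ℕ) :
    Nat.multinomial Finset.univ (m ∘ σ) = Nat.multinomial Finset.univ m := by
  unfold Nat.multinomial
  simp only [Function.comp]
  rw [Equiv.sum_comp σ m, Equiv.prod_comp σ (fun i => (m i).factorial)]

open Finset in
lemma key_sum (e n : ℕ) (w : ℕ → ℕ) :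
    ∑ m ∈ Finset.Nat.antidiagonalTuple (e + 1) n,
        (Nat.multinomial Finset.univ m) ^ 2 * w (m 0)
      = ∑ k ∈ Finset.range (n + 1), (n.choose k) ^ 2 * w (n - k) * f e k := by
  rw [sum_antidiagonalTuple_succ]
  have step : ∀ p ∈ Finset.HasAntidiagonal.antidiagonal n,
      ∑ x ∈ Finset.Nat.antidiagonalTuple e p.2,
          (Nat.multinomial Finset.univ (Fin.cons p.1 x)) ^ 2 * w ((Fin.cons p.1 x : Fin (e + 1) → ℕ) 0)
        = (n.choose p.1) ^ 2 * w p.1 * f e p.2 := by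
    intro p hp
    rw [Finset.HasAntidiagonal.mem_antidiagonal] at hp
    rw [f, Finset.mul_sum]
    refine Finset.sum_congr rfl fun x hx => ?_
    rw [Finset.Nat.mem_antidiagonalTuple] at hx
    rw [multinomial_cons_univ, hx, hp, Fin.cons_zero]
    ring
  rw [Finset.sum_congr rfl step, Finset.Nat.sum_antidiagonal_eq_sum_range_succ_mk]
  refine Finset.sum_nbij' (i := fun k => n - k) (j := fun k => n - k) ?_ ?_ ?_ ?_ ?_
  · intro k hk; rw [Finset.mem_range] at hk ⊢; omega
  · intro k hk; rw [Finset.mem_range] at hk ⊢; omega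
  · intro k hk; rw [Finset.mem_range] at hk; omega
  · intro k hk; rw [Finset.mem_range] at hk; omega
  · intro k hk
    rw [Finset.mem_range] at hk
    dsimp only
    have h2 : n - (n - k) = k := by omega
    rw [h2, Nat.choose_symm (by omega)]

theorem recursions_agree (d n : ℕ) (hd : 2 ≤ d) (hn : 1 ≤ n) :
    ∑ k ∈ Finset.range (n + 1), (n.choose k) ^ 2 * f (d - 1) k
      = d * ∑ k ∈ Finset.range n, n.choose k * (n - 1).choose k * f (d - 1) k := by
  obtain ⟨e, rfl⟩ : ∃ e, d = e + 1 := ⟨d - 1, by omega⟩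
  have he : e + 1 - 1 = e := rfl
  rw [he]
  -- Step A: LHS = f (e+1) n
  have hA : ∑ k ∈ Finset.range (n + 1), (n.choose k) ^ 2 * f e k = f (e + 1) n := by
    have h := key_sum e n (fun _ => 1)
    simp only [mul_one] at h
    rw [f, ← h]
  -- Step D
  have hD : ∑ m ∈ Finset.Nat.antidiagonalTuple (e + 1) n,
        (Nat.multinomial Finset.univ m) ^ 2 * m 0
      = ∑ k ∈ Finset.range (n + 1), (n.choose k) ^ 2 * (n - k) * f e k :=
    key_sum e n id
  -- Step B: symmetry
  have hB : ∀ i : Fin (e + 1),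
      ∑ m ∈ Finset.Nat.antidiagonalTuple (e + 1) n,
          (Nat.multinomial Finset.univ m) ^ 2 * m i
        = ∑ m ∈ Finset.Nat.antidiagonalTuple (e + 1) n,
          (Nat.multinomial Finset.univ m) ^ 2 * m 0 := by
    intro i
    refine Finset.sum_nbij' (i := fun m => m ∘ (Equiv.swap (0 : Fin (e+1)) i))
      (j := fun m => m ∘ (Equiv.swap (0 : Fin (e+1)) i)) ?_ ?_ ?_ ?_ ?_
    · intro m hm
      rw [Finset.Nat.mem_antidiagonalTuple] at hm ⊢
      rw [← hm]
      exact Equiv.sum_comp _ m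
    · intro m hm
      rw [Finset.Nat.mem_antidiagonalTuple] at hm ⊢
      rw [← hm]
      exact Equiv.sum_comp _ m
    · intro m _; funext j; simp
    · intro m _; funext j; simp
    · intro m _
      rw [multinomial_comp_equiv]
      simp
  -- Step C
  have hC : n * f (e + 1) n
      = (e + 1) * ∑ m ∈ Finset.Nat.antidiagonalTuple (e + 1) n,
          (Nat.multinomial Finset.univ m) ^ 2 * m 0 := by
    rw [f, Finset.mul_sum]
    have : ∀ m ∈ Finset.Nat.antidiagonalTuple (e + 1) n,
        n * (Nat.multinomial Finset.univ m) ^ 2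
          = ∑ i : Fin (e + 1), (Nat.multinomial Finset.univ m) ^ 2 * m i := by
      intro m hm
      rw [Finset.Nat.mem_antidiagonalTuple] at hm
      rw [← Finset.mul_sum, hm, mul_comm]
    rw [Finset.sum_congr rfl this, Finset.sum_comm]
    rw [Finset.sum_congr rfl (fun i _ => hB i)]
    simp [Finset.sum_const, Finset.card_univ, mul_comm]
  -- Step E: rewrite the weighted sum
  have hE : ∑ k ∈ Finset.range (n + 1), (n.choose k) ^ 2 * (n - k) * f e k
      = n * ∑ k ∈ Finset.range n, n.choose k * (n - 1).choose k * f e k := by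
    rw [Finset.mul_sum]
    rw [Finset.sum_range_succ]
    have hlast : (n.choose n) ^ 2 * (n - n) * f e n = 0 := by simp
    rw [hlast, add_zero]
    refine Finset.sum_congr rfl fun k hk => ?_
    rw [Finset.mem_range] at hk
    have hch : (n - 1).choose k * n = n.choose k * (n - k) := by
      have h := Nat.choose_mul_succ_eq (n - 1) k
      have h1 : n - 1 + 1 = n := Nat.succ_pred_eq_of_pos hn
      rwa [h1] at h
    rw [pow_two]
    calc n.choose k * n.choose k * (n - k) * f e k
        = n.choose k * (n.choose k * (n - k)) * f e k := by ring
      _ = n.choose k * ((n - 1).choose k * n) * f e k := by rw [hch]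
      _ = n * (n.choose k * (n - 1).choose k * f e k) := by ring
  have hmain : n * (∑ k ∈ Finset.range (n + 1), (n.choose k) ^ 2 * f e k)
      = n * ((e + 1) * ∑ k ∈ Finset.range n, n.choose k * (n - 1).choose k * f e k) := by
    rw [hA, hC, hD, hE]
    ring
  exact Nat.eq_of_mul_eq_mul_left hn hmain
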